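/- Let G be a finite simple graph containing an independent set T of vertices such that G−T has exactly c components, each of which is joined to T by at most 2t+1 edges. If G has a 2k-factor, then 2k·|T| ≤ 2t·c. -/

import Mathlib

open scoped Classical
noncomputable section

/-- One step of a walk inside the vertex set `R`. -/
def SimpleGraph.StepIn {V : Type} (G : SimpleGraph V) (R : Set V) (x y : V) : Prop :=
  x ∈ R ∧ y ∈ R ∧ G.Adj x y

/-- Reachability within the vertex set `R`. -/
def SimpleGraph.ReachIn {V : Type} (G : SimpleGraph V) (R : Set V) : V → V → Prop :=
  Relation.ReflTransGen (G.StepIn R)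

/-- `C` is (the vertex set of) a component of the subgraph of `G` induced by `R`. -/
def SimpleGraph.IsCompOf {V : Type} (G : SimpleGraph V) (R C : Set V) : Prop :=
  ∃ v ∈ R, C = {w | G.ReachIn R v w}

/-- The number of edges of `G` with one endpoint in `A` and the other in `B`
(for disjoint `A` and `B`). -/
def SimpleGraph.edgesBetween {V : Type} (G : SimpleGraph V) (A B : Set V) : ℕ :=
  Nat.card {p : V × V // p.1 ∈ A ∧ p.2 ∈ B ∧ G.Adj p.1 p.2}

section Aux

variable {V : Type} {G : SimpleGraph V} {R C : Set V}

lemma stepIn_symm : Symmetric (G.StepIn R) := fun _ _ ⟨hx, hy, h⟩ => ⟨hy, hx, h.symm⟩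

lemma reachIn_symm {x y : V} (h : G.ReachIn R x y) : G.ReachIn R y x :=
  by haveI : Std.Symm (G.StepIn R) := ⟨fun _ _ h' => stepIn_symm h'⟩
     exact Relation.ReflTransGen.symmetric.symm _ _ h

lemma mem_of_reachIn {x y : V} (hx : x ∈ R) (h : G.ReachIn R x y) : y ∈ R := by
  rcases Relation.ReflTransGen.cases_tail h with h | ⟨z, _, hz⟩
  · exact h ▸ hx
  · exact hz.2.1

lemma comp_subset (hC : G.IsCompOf R C) : C ⊆ R := by
  obtain ⟨v, hv, rfl⟩ := hC
  exact fun w hw => mem_of_reachIn hv hw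

lemma comp_eq_of_mem {x : V} (hC : G.IsCompOf R C) (hx : x ∈ C) :
    C = {w | G.ReachIn R x w} := by
  obtain ⟨v, hv, rfl⟩ := hC
  ext w
  constructor
  · exact fun hw => Relation.ReflTransGen.trans (reachIn_symm hx) hw
  · exact fun hw => Relation.ReflTransGen.trans hx hw

lemma comp_closed {x y : V} (hC : G.IsCompOf R C) (hx : x ∈ C) (hy : y ∈ R)
    (hxy : G.Adj x y) : y ∈ C := by
  obtain ⟨v, hv, rfl⟩ := hC
  exact Relation.ReflTransGen.tail hx ⟨mem_of_reachIn hv hx, hy, hxy⟩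

lemma isCompOf_compOf {x : V} (hx : x ∈ R) :
    G.IsCompOf R {w | G.ReachIn R x w} := ⟨x, hx, rfl⟩

lemma mem_compOf {x : V} : x ∈ {w | G.ReachIn R x w} := Relation.ReflTransGen.refl

end Aux

/-- If a finite simple graph `G` has an independent set `T` such that `G−T` has exactly
`c` components, each joined to `T` by at most `2t+1` edges, and `G` has a `2k`-factor,
then `2k·|T| ≤ 2t·c`. -/
theorem two_k_T_le_of_factor
    {V : Type} [Fintype V] (G : SimpleGraph V) (T : Set V) (t k c : ℕ) (hk : 0 < k)
    (hT : ∀ a ∈ T, ∀ b ∈ T, ¬ G.Adj a b)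
    (hc : Nat.card {C : Set V // G.IsCompOf Tᶜ C} = c)
    (hbound : ∀ C : Set V, G.IsCompOf Tᶜ C → G.edgesBetween C T ≤ 2 * t + 1)
    (hfac : ∃ H : SimpleGraph V, H ≤ G ∧ ∀ v : V, H.degree v = 2 * k) :
    2 * k * T.ncard ≤ 2 * t * c := by
  classical
  obtain ⟨H, hHG, hdeg⟩ := hfac
  have hTH : ∀ a ∈ T, ∀ b ∈ T, ¬ H.Adj a b := fun a ha b hb hab => hT a ha b hb (hHG hab)
  -- Step A : H.edgesBetween Tᶜ T = 2 * k * T.ncard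
  have stepA : H.edgesBetween Tᶜ T = 2 * k * T.ncard := by
    have e1 : {p : V × V // p.1 ∈ Tᶜ ∧ p.2 ∈ T ∧ H.Adj p.1 p.2} ≃
        Σ b : T, ↥(H.neighborSet (b : V)) := by
      refine ⟨fun p => ⟨⟨p.1.2, p.2.2.1⟩, ⟨p.1.1, p.2.2.2.symm⟩⟩,
        fun q => ⟨(q.2.1, q.1.1), ?_, q.1.2, (q.2.2 : H.Adj q.1.1 q.2.1).symm⟩,
        fun p => rfl, fun q => rfl⟩
      intro hmem
      exact hTH _ q.1.2 _ hmem (q.2.2 : H.Adj q.1.1 q.2.1)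
    rw [SimpleGraph.edgesBetween, Nat.card_congr e1, Nat.card_eq_fintype_card,
      Fintype.card_sigma]
    have : ∀ b : T, Fintype.card ↥(H.neighborSet (b : V)) = 2 * k := fun b => by
      rw [SimpleGraph.card_neighborSet_eq_degree, hdeg]
    rw [Finset.sum_congr rfl (fun b _ => this b), Finset.sum_const, Finset.card_univ,
      smul_eq_mul, ← Nat.card_eq_fintype_card, Nat.card_coe_set_eq, mul_comm]
  -- Step B : split over components
  have hfin : Finite {C : Set V // G.IsCompOf Tᶜ C} := by infer_instance
  have hfinF : Fintype {C : Set V // G.IsCompOf Tᶜ C} := Fintype.ofFinite _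
  set comps := {C : Set V // G.IsCompOf Tᶜ C} with hcomps
  -- the component assignment
  let f : {p : V × V // p.1 ∈ Tᶜ ∧ p.2 ∈ T ∧ H.Adj p.1 p.2} → comps :=
    fun p => ⟨{w | G.ReachIn Tᶜ p.1.1 w}, isCompOf_compOf p.2.1⟩
  have stepB : H.edgesBetween Tᶜ T = ∑ C : comps, H.edgesBetween C.1 T := by
    rw [SimpleGraph.edgesBetween, Nat.card_congr (Equiv.sigmaFiberEquiv f).symm,
      Nat.card_eq_fintype_card, Fintype.card_sigma]
    refine Finset.sum_congr rfl fun C _ => ?_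
    rw [SimpleGraph.edgesBetween, ← Nat.card_eq_fintype_card]
    have hmemC : ∀ q : {x // f x = C}, q.1.1.1 ∈ C.1 := by
      intro q
      have h := congrArg Subtype.val q.2
      simp only [f] at h
      rw [← h]
      exact mem_compOf
    exact Nat.card_congr
      (⟨fun q => ⟨q.1.1, hmemC q, q.1.2.2.1, q.1.2.2.2⟩,
        fun p => ⟨⟨p.1, comp_subset C.2 p.2.1, p.2.2.1, p.2.2.2⟩,
          Subtype.ext (comp_eq_of_mem C.2 p.2.1).symm⟩,
        fun q => Subtype.ext (Subtype.ext rfl), fun p => Subtype.ext rfl⟩ :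
        {x // f x = C} ≃ {p : V × V // p.1 ∈ C.1 ∧ p.2 ∈ T ∧ H.Adj p.1 p.2})
  -- Step C : per-component bound
  have stepC : ∀ C : comps, H.edgesBetween C.1 T ≤ 2 * t := by
    intro C
    obtain ⟨Cset, hC⟩ := C
    show H.edgesBetween Cset T ≤ 2 * t
    -- H-edges between C and T is even
    have hsub : Cset ⊆ Tᶜ := comp_subset hC
    -- the "out-darts from C" set
    have hScard : Nat.card {p : V × V // p.1 ∈ Cset ∧ H.Adj p.1 p.2} =
        2 * k * Nat.card Cset := by
      have e : {p : V × V // p.1 ∈ Cset ∧ H.Adj p.1 p.2} ≃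
          Σ v : Cset, ↥(H.neighborSet (v : V)) :=
        ⟨fun p => ⟨⟨p.1.1, p.2.1⟩, ⟨p.1.2, p.2.2⟩⟩,
         fun q => ⟨(q.1.1, q.2.1), q.1.2, q.2.2⟩,
         fun p => rfl, fun q => rfl⟩
      rw [Nat.card_congr e, Nat.card_eq_fintype_card, Fintype.card_sigma]
      have : ∀ v : Cset, Fintype.card ↥(H.neighborSet (v : V)) = 2 * k := fun v => by
        rw [SimpleGraph.card_neighborSet_eq_degree, hdeg]
      rw [Finset.sum_congr rfl (fun v _ => this v), Finset.sum_const, Finset.card_univ,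
        smul_eq_mul, ← Nat.card_eq_fintype_card, mul_comm]
    -- split out-darts by whether the second endpoint is in T
    have hsplit : Nat.card {p : V × V // p.1 ∈ Cset ∧ H.Adj p.1 p.2} =
        H.edgesBetween Cset T +
        Nat.card {p : V × V // p.1 ∈ Cset ∧ p.2 ∈ Cset ∧ H.Adj p.1 p.2} := by
      rw [Nat.card_congr (Equiv.sumCompl (fun s : {p : V × V // p.1 ∈ Cset ∧ H.Adj p.1 p.2} => s.1.2 ∈ T)).symm,
        Nat.card_sum]
      congr 1
      · rw [SimpleGraph.edgesBetween]
        exact Nat.card_congr ⟨fun q => ⟨q.1.1, q.1.2.1, q.2, q.1.2.2⟩,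
          fun p => ⟨⟨p.1, p.2.1, p.2.2.2⟩, p.2.2.1⟩,
          fun q => Subtype.ext (Subtype.ext rfl), fun p => Subtype.ext rfl⟩
      · refine Nat.card_congr ⟨fun q => ⟨q.1.1, q.1.2.1, ?_, q.1.2.2⟩,
          fun p => ⟨⟨p.1, p.2.1, p.2.2.2⟩, fun hmem => (hsub p.2.2.1 hmem : _)⟩,
          fun q => Subtype.ext (Subtype.ext rfl), fun p => Subtype.ext rfl⟩
        exact comp_closed hC q.1.2.1 q.2 (hHG q.1.2.2)
    -- the inner count is even (handshake on the graph restricted to C)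
    have hDeven : Even (Nat.card {p : V × V // p.1 ∈ Cset ∧ p.2 ∈ Cset ∧ H.Adj p.1 p.2}) := by
      let K : SimpleGraph V :=
        { Adj := fun x y => x ∈ Cset ∧ y ∈ Cset ∧ H.Adj x y
          symm := ⟨fun x y ⟨hx, hy, h⟩ => ⟨hy, hx, h.symm⟩⟩
          loopless := ⟨fun x ⟨_, _, h⟩ => H.irrefl h⟩ }
      have e : {p : V × V // p.1 ∈ Cset ∧ p.2 ∈ Cset ∧ H.Adj p.1 p.2} ≃ K.Dart :=
        ⟨fun p => ⟨p.1, p.2⟩, fun d => ⟨d.toProd, d.adj⟩, fun p => rfl, fun d => rfl⟩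
      rw [Nat.card_congr e, Nat.card_eq_fintype_card,
        SimpleGraph.dart_card_eq_twice_card_edges]
      exact even_two_mul _
    -- H-edges ≤ G-edges between C and T
    have hle : H.edgesBetween Cset T ≤ G.edgesBetween Cset T := by
      refine Nat.card_le_card_of_injective
        (fun p => ⟨p.1, p.2.1, p.2.2.1, hHG p.2.2.2⟩) ?_
      intro a b hab
      exact Subtype.ext (by simpa using congrArg Subtype.val hab)
    have hEeven : Even (H.edgesBetween Cset T) := by
      have hS : Even (Nat.card {p : V × V // p.1 ∈ Cset ∧ H.Adj p.1 p.2}) := by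
        rw [hScard]; exact ⟨k * Nat.card Cset, by ring⟩
      obtain ⟨a, ha⟩ := hS
      obtain ⟨b, hb⟩ := hDeven
      exact ⟨a - b, by omega⟩
    obtain ⟨m, hm⟩ := hEeven
    have := hbound Cset hC
    omega
  -- combine
  calc 2 * k * T.ncard = ∑ C : comps, H.edgesBetween C.1 T := by rw [← stepA, stepB]
    _ ≤ ∑ _C : comps, 2 * t := Finset.sum_le_sum fun C _ => stepC C
    _ = 2 * t * c := by
        rw [Finset.sum_const, Finset.card_univ, smul_eq_mul, ← Nat.card_eq_fintype_card, hc,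
          mul_comm]
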